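/- Let n ≥ 3 and 1 ≤ k ≤ n. A finite simple graph with n vertices admitting a rique layout with k riques has at most (2n+2)k − k² + (n − 3) edges. -/

import Mathlib

namespace DequePaper

/-- The four possible types of an edge in a deque: head-head, tail-tail,
head-tail and tail-head. -/
inductive EdgeType : Type
  | hh | tt | ht | th
  deriving DecidableEq

variable {V : Type} [LinearOrder V]

/-- Edges `(u,v)` and `(u',v')` (with `u ≺ v`, `u' ≺ v'`) cross:
`u ≺ u' ≺ v ≺ v'`. -/
def Cross (e e' : V × V) : Prop :=
  e.1 < e'.1 ∧ e'.1 < e.2 ∧ e.2 < e'.2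

/-- Edges `(u,v)` and `(u',v')` nest: `u ≺ u' ≺ v' ≺ v`. -/
def Nest (e e' : V × V) : Prop :=
  e.1 < e'.1 ∧ e'.1 < e'.2 ∧ e'.2 < e.2

/-- A set of edges is a stack iff no two of its edges cross. -/
def IsStack (E : Set (V × V)) : Prop :=
  ∀ e ∈ E, ∀ e' ∈ E, ¬ Cross e e'

/-- A set of edges is a queue iff no two of its edges nest. -/
def IsQueue (E : Set (V × V)) : Prop :=
  ∀ e ∈ E, ∀ e' ∈ E, ¬ Nest e e'

/-- A set of edges is a rique iff it contains no three edges
`(a,a')`, `(b,b')`, `(c,c')` with `a ≺ b ≺ c ≺ b'`, `b' ≺ a'` and `b' ≺ c'`. -/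
def IsRique (E : Set (V × V)) : Prop :=
  ¬ ∃ a a' b b' c c' : V, (a, a') ∈ E ∧ (b, b') ∈ E ∧ (c, c') ∈ E ∧
      a < b ∧ b < c ∧ c < b' ∧ b' < a' ∧ b' < c'

/-- The extension of the vertex order: all vertices, followed by the
wrap points (modelled by natural numbers), each wrap point lying strictly
after every vertex. -/
abbrev Ext (V : Type) := V ⊕ₗ ℕ

/-- A vertex, viewed in the extended order. -/
def vtx (v : V) : Ext V := toLex (Sum.inl v)

/-- A wrap point, viewed in the extended order. -/
def wpt (m : ℕ) : Ext V := toLex (Sum.inr m)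

/-- The interval of an edge in the upper family: `[u,v]` for an hh edge,
`[u,p(e)]` for an ht edge, `[v,p(e)]` for a th edge, nothing for a tt edge. -/
def upperIv (typ : V × V → EdgeType) (wrap : V × V → ℕ) (e : V × V) :
    Option (Ext V × Ext V) :=
  match typ e with
  | EdgeType.hh => some (vtx e.1, vtx e.2)
  | EdgeType.ht => some (vtx e.1, wpt (wrap e))
  | EdgeType.th => some (vtx e.2, wpt (wrap e))
  | EdgeType.tt => none

/-- The interval of an edge in the lower family: `[u,v]` for a tt edge,
`[v,p(e)]` for an ht edge, `[u,p(e)]` for a th edge, nothing for an hh edge. -/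
def lowerIv (typ : V × V → EdgeType) (wrap : V × V → ℕ) (e : V × V) :
    Option (Ext V × Ext V) :=
  match typ e with
  | EdgeType.tt => some (vtx e.1, vtx e.2)
  | EdgeType.ht => some (vtx e.2, wpt (wrap e))
  | EdgeType.th => some (vtx e.1, wpt (wrap e))
  | EdgeType.hh => none

/-- Two intervals `[x,y]` and `[x',y']` of the extended order cross:
`x ≺ x' ≺ y ≺ y'`. -/
def IvCross (i i' : Ext V × Ext V) : Prop :=
  i.1 < i'.1 ∧ i'.1 < i.2 ∧ i.2 < i'.2

/-- A family of intervals (one for each edge of `E` on which `iv` is defined)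
is pairwise non-crossing. -/
def FamilyNonCrossing (E : Set (V × V)) (iv : V × V → Option (Ext V × Ext V)) : Prop :=
  ∀ e ∈ E, ∀ e' ∈ E, ∀ i ∈ iv e, ∀ i' ∈ iv e', ¬ IvCross i i'

/-- `typ` and `wrap` form a witnessing type assignment for the edge set `E`
being a deque: wrap points are assigned injectively to the ht/th edges, and
both the upper and the lower families of intervals are pairwise non-crossing. -/
def IsDequeWitness (E : Set (V × V)) (typ : V × V → EdgeType) (wrap : V × V → ℕ) : Prop :=
  (∀ e ∈ E, ∀ e' ∈ E, (typ e = EdgeType.ht ∨ typ e = EdgeType.th) →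
      (typ e' = EdgeType.ht ∨ typ e' = EdgeType.th) → wrap e = wrap e' → e = e') ∧
  FamilyNonCrossing E (upperIv typ wrap) ∧
  FamilyNonCrossing E (lowerIv typ wrap)

/-- A set of edges is a deque iff it admits a witnessing type assignment. -/
def IsDeque (E : Set (V × V)) : Prop :=
  ∃ typ wrap, IsDequeWitness E typ wrap

/-- The edges of a graph `G`, written as ordered pairs with respect to the
vertex order given by the order embedding `f` into `ℕ`. -/
def orderedEdges {W : Type} (G : SimpleGraph W) (f : W ↪ ℕ) : Set (ℕ × ℕ) :=
  {p | ∃ u v, G.Adj u v ∧ f u = p.1 ∧ f v = p.2 ∧ p.1 < p.2}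

/-- `G` admits a layout with `k` pages, each page satisfying `P`:
a vertex order (injection into `ℕ`) together with a partition of the
edges into `k` parts (given by the colouring `c`), each part satisfying `P`. -/
def HasLayout {W : Type} (G : SimpleGraph W) (k : ℕ)
    (P : Set (ℕ × ℕ) → Prop) : Prop :=
  ∃ (f : W ↪ ℕ) (c : ℕ × ℕ → Fin k),
    ∀ i : Fin k, P {p | p ∈ orderedEdges G f ∧ c p = i}

/-- `G` admits a `k`-stack layout. -/
def HasStackLayout {W : Type} (G : SimpleGraph W) (k : ℕ) : Prop :=
  HasLayout G k IsStack

/-- `G` admits a `k`-queue layout. -/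
def HasQueueLayout {W : Type} (G : SimpleGraph W) (k : ℕ) : Prop :=
  HasLayout G k IsQueue

/-- `G` admits a `k`-rique layout. -/
def HasRiqueLayout {W : Type} (G : SimpleGraph W) (k : ℕ) : Prop :=
  HasLayout G k IsRique

/-- `G` admits a `k`-deque layout. -/
def HasDequeLayout {W : Type} (G : SimpleGraph W) (k : ℕ) : Prop :=
  HasLayout G k IsDeque

/-- The stack-number of `G`. -/
noncomputable def stackNumber {W : Type} (G : SimpleGraph W) : ℕ :=
  sInf {k | HasStackLayout G k}

/-- The queue-number of `G`. -/
noncomputable def queueNumber {W : Type} (G : SimpleGraph W) : ℕ :=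
  sInf {k | HasQueueLayout G k}

/-- The rique-number of `G`. -/
noncomputable def riqueNumber {W : Type} (G : SimpleGraph W) : ℕ :=
  sInf {k | HasRiqueLayout G k}

/-- The deque-number of `G`. -/
noncomputable def dequeNumber {W : Type} (G : SimpleGraph W) : ℕ :=
  sInf {k | HasDequeLayout G k}

set_option maxHeartbeats 1000000 in
theorem wstar (m : ℕ) : ∀ (R : Finset (ℕ × ℕ)) (B τ : ℕ), R.card ≤ m →
    IsRique (R : Set (ℕ × ℕ)) →
    (∀ p ∈ R, p.1 + 2 ≤ p.2) →
    (∀ p ∈ R, p.2 ≤ B) →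
    (∀ p ∈ R, τ ≤ p.1 + p.2) →
    R.Nonempty → R.card + τ ≤ 2 * B := by
  induction m with
  | zero =>
    intro R B τ hcard _ _ _ _ hne
    have := Finset.card_pos.2 hne; omega
  | succ m ih =>
    intro R B τ hcard hR hnu hB hτ hne
    classical
    obtain ⟨p₀, hp₀⟩ := hne
    have hp₀nu := hnu _ hp₀
    have hp₀B := hB _ hp₀
    have hp₀τ := hτ _ hp₀
    set S := R.filter (fun e => ∃ e' ∈ R, e'.1 < e.1 ∧ e.2 < e'.2) with hSdef
    by_cases hSne : S.Nonempty
    · -- main case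
      have hSsub : S ⊆ R := Finset.filter_subset _ _
      have hWne : (S.image Prod.snd).Nonempty := hSne.image _
      set v := (S.image Prod.snd).min' hWne with hvdef
      have hvmin : ∀ e ∈ S, v ≤ e.2 := fun e he =>
        Finset.min'_le _ _ (Finset.mem_image_of_mem _ he)
      have hSvne : (S.filter (fun e => e.2 = v)).Nonempty := by
        obtain ⟨w, hw⟩ := Finset.mem_image.1 ((S.image Prod.snd).min'_mem hWne)
        exact ⟨w, Finset.mem_filter.2 ⟨hw.1, hw.2⟩⟩
      have hC0ne : ((S.filter (fun e => e.2 = v)).image Prod.fst).Nonempty := hSvne.image _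
      set u := ((S.filter (fun e => e.2 = v)).image Prod.fst).max' hC0ne with hudef
      have humax : ∀ e ∈ S, e.2 = v → e.1 ≤ u := fun e he hev =>
        Finset.le_max' _ _ (Finset.mem_image_of_mem _ (Finset.mem_filter.2 ⟨he, hev⟩))
      have hsS : (u, v) ∈ S := by
        have hmx : u ∈ (S.filter (fun e => e.2 = v)).image Prod.fst :=
          Finset.max'_mem _ hC0ne
        obtain ⟨e, he, heu⟩ := Finset.mem_image.1 hmx
        have h2 := Finset.mem_filter.1 he
        have : e = (u, v) := Prod.ext heu h2.2
        rw [← this]; exact h2.1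
      have hsR : (u, v) ∈ R := hSsub hsS
      obtain ⟨t, htR, ht1, ht2⟩ := (Finset.mem_filter.1 hsS).2
      have huv : u + 2 ≤ v := hnu _ hsR
      have hvB : v + 1 ≤ B := by have := hB _ htR; omega
      have hτuv : τ ≤ u + v := hτ _ hsR
      -- L1 : no left endpoints strictly inside (u,v)
      have L1 : ∀ e ∈ R, e.1 ≤ u ∨ v ≤ e.1 := by
        intro e he
        by_contra hcon
        push_neg at hcon
        obtain ⟨h1, h2⟩ := hcon
        have henu := hnu _ he
        rcases lt_trichotomy e.2 v with h3|h3|h3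
        · have hmem : e ∈ S := Finset.mem_filter.2 ⟨he, ⟨(u,v), hsR, h1, h3⟩⟩
          have := hvmin _ hmem; omega
        · have hmem : e ∈ S := Finset.mem_filter.2 ⟨he, ⟨t, htR, by omega, by omega⟩⟩
          have := humax _ hmem h3; omega
        · exact hR ⟨t.1, t.2, u, v, e.1, e.2, by simpa using htR, by simpa using hsR,
            by simpa using he, ht1, h1, h2, ht2, h3⟩
      -- L2
      have L2 : ∀ e ∈ R, u < e.2 → e.2 ≤ v → e ≠ (u, v) → e.1 < u := by
        intro e he h1 h2 h3
        have henu := hnu _ he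
        have h4 : e.1 ≤ u := by
          rcases L1 e he with h|h
          · exact h
          · omega
        rcases h4.lt_or_eq with h|h
        · exact h
        rcases h2.lt_or_eq with h5|h5
        · have hmem : e ∈ S := Finset.mem_filter.2 ⟨he, ⟨t, htR, by omega, by omega⟩⟩
          have := hvmin _ hmem; omega
        · exact absurd (Prod.ext h h5) h3
      set Src := (R.filter (fun e => u < e.2 ∧ e.2 ≤ v)).erase (u,v) with hSrcdef
      set NS := R.filter (fun e => ¬(u < e.2 ∧ e.2 ≤ v)) with hNSdef
      have hSrcmem : ∀ e ∈ Src, e ∈ R ∧ u < e.2 ∧ e.2 ≤ v ∧ e ≠ (u,v) ∧ e.1 < u := by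
        intro e he
        have h1 := Finset.mem_of_mem_erase he
        have h2 := Finset.mem_filter.1 h1
        have h3 := Finset.ne_of_mem_erase he
        exact ⟨h2.1, h2.2.1, h2.2.2, h3, L2 _ h2.1 h2.2.1 h2.2.2 h3⟩
      have hNSmem : ∀ e ∈ NS, e ∈ R ∧ (e.2 ≤ u ∨ v < e.2) := by
        intro e he
        have h2 := Finset.mem_filter.1 he
        refine ⟨h2.1, ?_⟩
        have := h2.2; omega
      have hcardsplit : R.card = NS.card + Src.card + 1 := by
        have hmem : (u,v) ∈ R.filter (fun e => u < e.2 ∧ e.2 ≤ v) :=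
          Finset.mem_filter.2 ⟨hsR, by omega, le_refl v⟩
        have h1 := Finset.card_erase_add_one hmem
        have h2 := Finset.card_filter_add_card_filter_not
          (s := R) (p := fun e => u < e.2 ∧ e.2 ≤ v)
        rw [hSrcdef, hNSdef]
        omega
      -- L3 staircase
      have L3 : ∀ e ∈ Src, ∀ e' ∈ Src, e.2 < e'.2 → e.1 ≤ e'.1 := by
        intro e he e' he' hlt
        by_contra hcon
        push_neg at hcon
        have h1 := hSrcmem e he
        have h2 := hSrcmem e' he'
        have hmem : e ∈ S := Finset.mem_filter.2 ⟨h1.1, ⟨e', h2.1, hcon, hlt⟩⟩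
        have := hvmin _ hmem
        omega
      set NonMin := Src.filter (fun e => ∃ e' ∈ Src, e'.1 = e.1 ∧ e'.2 < e.2) with hNMdef
      have hNMsub : NonMin ⊆ Src := Finset.filter_subset _ _
      have hNMinj : ∀ e ∈ NonMin, ∀ e' ∈ NonMin, e.2 = e'.2 → e = e' := by
        intro p hp q hq hpq
        by_contra hne'
        obtain ⟨hpS, wp, hwp, hwp1, hwp2⟩ := Finset.mem_filter.1 hp
        obtain ⟨hqS, wq, hwq, hwq1, hwq2⟩ := Finset.mem_filter.1 hq
        have h1 : p.1 ≠ q.1 := fun h => hne' (Prod.ext h hpq)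
        rcases h1.lt_or_gt with h|h
        · have := L3 wq hwq p hpS (by omega); omega
        · have := L3 wp hwp q hqS (by omega); omega
      set d := v - (u + 1) with hddef
      have hNMcard : ∀ W : ℕ, (∀ e ∈ NonMin, W ≤ e.2) → NonMin.card ≤ v + 1 - W := by
        intro W hW
        have h1 : NonMin.card ≤ (Finset.Icc W v).card := by
          apply Finset.card_le_card_of_injOn Prod.snd
          · intro e he
            have h2 := (hSrcmem e (hNMsub he)).2.2.1
            exact Finset.mem_Icc.2 ⟨hW e he, h2⟩
          · intro p hp q hq hpq
            exact hNMinj p (Finset.mem_coe.1 hp) q (Finset.mem_coe.1 hq) hpq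
        rw [Nat.card_Icc] at h1; omega
      have hNMright : ∀ e ∈ NonMin, u + 2 ≤ e.2 := by
        intro e he
        obtain ⟨hpS, wp, hwp, hwp1, hwp2⟩ := Finset.mem_filter.1 he
        have := (hSrcmem wp hwp).2.1
        omega
      -- the compression map
      have hd1 : 1 ≤ d := by omega
      set φ : ℕ → ℕ := fun x => if x ≤ u then x else if x ≤ v then u + 1 else x - d with hφdef
      have hφlow : ∀ x, x ≤ u → φ x = x := by
        intro x h; simp only [hφdef]; split_ifs <;> omega
      have hφmid : ∀ x, u < x → x ≤ v → φ x = u + 1 := by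
        intro x h1 h2; simp only [hφdef]; split_ifs <;> omega
      have hφhigh : ∀ x, v < x → φ x = x - d := by
        intro x h; simp only [hφdef]; split_ifs <;> omega
      have hφmono : ∀ a b, a ≤ b → φ a ≤ φ b := by
        intro a b hab; simp only [hφdef]; split_ifs <;> omega
      have hφrev : ∀ a b, φ a < φ b → a < b := by
        intro a b h
        by_contra hcon
        push_neg at hcon
        exact absurd (hφmono _ _ hcon) (by omega)
      set Φ : ℕ × ℕ → ℕ × ℕ := fun p => (φ p.1, φ p.2) with hΦdef
      set R' := (R.image Φ).erase (u, u+1) with hR'def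
      have hsΦ : Φ (u,v) = (u, u+1) := by
        simp only [hΦdef]
        rw [hφlow u le_rfl, hφmid v (by omega) le_rfl]
      have hIMGmem : (u, u+1) ∈ R.image Φ := hsΦ ▸ Finset.mem_image_of_mem Φ hsR
      have hR'card : R'.card + 1 = (R.image Φ).card := by
        rw [hR'def]; exact Finset.card_erase_add_one hIMGmem
      have hR'lt : R'.card < R.card := by
        have := Finset.card_image_le (f := Φ) (s := R)
        have h0 : 0 < R.card := Finset.card_pos.2 ⟨p₀, hp₀⟩
        omega
      -- image formulas per class
      have hcl1 : ∀ e : ℕ × ℕ, e ∈ R → e.2 ≤ u → Φ e = e := by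
        intro e he h
        have := hnu _ he
        simp only [hΦdef]
        rw [hφlow e.1 (by omega), hφlow e.2 h]
      have hcl2 : ∀ e : ℕ × ℕ, e.1 < u → u < e.2 → e.2 ≤ v → Φ e = (e.1, u+1) := by
        intro e h1 h2 h3
        simp only [hΦdef]
        rw [hφlow e.1 (by omega), hφmid e.2 h2 h3]
      have hcl3 : ∀ e : ℕ × ℕ, e.1 ≤ u → v < e.2 → Φ e = (e.1, e.2 - d) := by
        intro e h1 h2
        simp only [hΦdef]
        rw [hφlow e.1 h1, hφhigh e.2 h2]
      have hcl4 : ∀ e : ℕ × ℕ, v ≤ e.1 → v < e.2 → Φ e = (φ e.1, e.2 - d) := by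
        intro e h1 h2
        simp only [hΦdef]
        rw [hφhigh e.2 h2]
      -- only s maps to (u, u+1)
      have honly : ∀ e ∈ R, Φ e = (u, u+1) → e = (u, v) := by
        intro e he hΦe
        have henu := hnu _ he
        have hc1 : φ e.1 = u := congrArg Prod.fst hΦe
        have hc2 : φ e.2 = u + 1 := congrArg Prod.snd hΦe
        have h1 : e.1 = u := by
          rcases L1 e he with h|h
          · rw [hφlow e.1 h] at hc1; exact hc1
          · rcases h.lt_or_eq with h'|h'
            · rw [hφhigh e.1 h'] at hc1; omega
            · rw [hφmid e.1 (by omega) (by omega)] at hc1; omega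
        have h2 : u < e.2 ∧ e.2 ≤ v := by
          by_contra hcon
          rcases (by omega : e.2 ≤ u ∨ v < e.2) with h|h
          · rw [hφlow e.2 h] at hc2; omega
          · rw [hφhigh e.2 h] at hc2; omega
        by_contra hcon
        have := L2 e he h2.1 h2.2 hcon
        omega
      -- R' is a rique
      have hR'rique : IsRique (R' : Set (ℕ × ℕ)) := by
        rintro ⟨a, a', b, b', c, c', h1, h2, h3, hab, hbc, hcb', hb'a', hb'c'⟩
        have hsub : (R' : Set (ℕ × ℕ)) ⊆ ((R.image Φ : Finset (ℕ × ℕ)) : Set (ℕ × ℕ)) := by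
          intro x hx
          exact Finset.mem_coe.2 (Finset.mem_of_mem_erase (Finset.mem_coe.1 hx))
        obtain ⟨e₁, he₁, hΦ₁⟩ := Finset.mem_image.1 (Finset.mem_coe.1 (hsub h1))
        obtain ⟨e₂, he₂, hΦ₂⟩ := Finset.mem_image.1 (Finset.mem_coe.1 (hsub h2))
        obtain ⟨e₃, he₃, hΦ₃⟩ := Finset.mem_image.1 (Finset.mem_coe.1 (hsub h3))
        have q₁a : φ e₁.1 = a := congrArg Prod.fst hΦ₁
        have q₁b : φ e₁.2 = a' := congrArg Prod.snd hΦ₁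
        have q₂a : φ e₂.1 = b := congrArg Prod.fst hΦ₂
        have q₂b : φ e₂.2 = b' := congrArg Prod.snd hΦ₂
        have q₃a : φ e₃.1 = c := congrArg Prod.fst hΦ₃
        have q₃b : φ e₃.2 = c' := congrArg Prod.snd hΦ₃
        exact hR ⟨e₁.1, e₁.2, e₂.1, e₂.2, e₃.1, e₃.2,
          by simpa using he₁, by simpa using he₂, by simpa using he₃,
          hφrev _ _ (by rw [q₁a, q₂a]; exact hab),
          hφrev _ _ (by rw [q₂a, q₃a]; exact hbc),
          hφrev _ _ (by rw [q₃a, q₂b]; exact hcb'),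
          hφrev _ _ (by rw [q₂b, q₁b]; exact hb'a'),
          hφrev _ _ (by rw [q₂b, q₃b]; exact hb'c')⟩
      -- preimages
      have hpre : ∀ e' ∈ R', ∃ e, e ∈ R ∧ Φ e = e' ∧ e ≠ (u, v) := by
        intro e' he'
        have h1 := Finset.mem_of_mem_erase (hR'def ▸ he')
        have h2 := Finset.ne_of_mem_erase (hR'def ▸ he')
        obtain ⟨e, he, hΦe⟩ := Finset.mem_image.1 h1
        refine ⟨e, he, hΦe, fun hc => h2 ?_⟩
        rw [← hΦe, hc, hsΦ]
      -- structural properties of images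
      have hprops : ∀ e ∈ R, e ≠ (u, v) →
          (Φ e).1 + 2 ≤ (Φ e).2 ∧ (Φ e).2 ≤ B - d ∧ τ - d ≤ (Φ e).1 + (Φ e).2 := by
        intro e he hne'
        have henu := hnu _ he
        have heB := hB _ he
        have heτ := hτ _ he
        rcases (by omega : e.2 ≤ u ∨ (u < e.2 ∧ e.2 ≤ v) ∨ v < e.2) with h|h|h
        · rw [hcl1 e he h]; omega
        · have h5 := L2 e he h.1 h.2 hne'
          rw [hcl2 e h5 h.1 h.2]
          simp only
          omega
        · rcases L1 e he with h6|h6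
          · rw [hcl3 e h6 h]
            simp only
            omega
          · rw [hcl4 e h6 h]
            simp only
            rcases h6.lt_or_eq with h7|h7
            · rw [hφhigh e.1 h7]; omega
            · rw [← h7, hφmid v (by omega) le_rfl]; omega
      -- case B sum improvement
      have hsumB : (∃ ee ∈ Src, ee.2 = u + 1) → ∀ e ∈ R, e ≠ (u, v) →
          τ - (d - 1) ≤ (Φ e).1 + (Φ e).2 := by
        rintro ⟨ee, heeSrc, hee2⟩ e he hne'
        obtain ⟨heeR, _, _, _, hee1⟩ := hSrcmem ee heeSrc
        have heenu := hnu _ heeR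
        have heeτ := hτ _ heeR
        have henu := hnu _ he
        have heτ := hτ _ he
        rcases (by omega : e.2 ≤ u ∨ (u < e.2 ∧ e.2 ≤ v) ∨ v < e.2) with h|h|h
        · rw [hcl1 e he h]; omega
        · have h5 := L2 e he h.1 h.2 hne'
          rw [hcl2 e h5 h.1 h.2]
          simp only
          rcases h.2.lt_or_eq with h7|h7
          · omega
          · -- e.2 = v : need τ + 1 ≤ e.1 + v
            have hkey : τ + 1 ≤ e.1 + v := by
              by_contra hcon
              have heeS : ee ∈ S := by
                refine Finset.mem_filter.2 ⟨heeR, ⟨e, he, by omega, by omega⟩⟩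
              have := hvmin _ heeS
              omega
            omega
        · rcases L1 e he with h6|h6
          · rcases h6.lt_or_eq with h8|h8
            · rw [hcl3 e h6 h]
              simp only
              have hkey : τ + 1 ≤ e.1 + e.2 := by
                by_contra hcon
                have heeS : ee ∈ S := by
                  refine Finset.mem_filter.2 ⟨heeR, ⟨e, he, by omega, by omega⟩⟩
                have := hvmin _ heeS
                omega
              omega
            · rw [hcl3 e h6 h]
              simp only
              omega
          · rw [hcl4 e h6 h]
            simp only
            rcases h6.lt_or_eq with h7|h7
            · rw [hφhigh e.1 h7]; omega
            · rw [← h7, hφmid v (by omega) le_rfl]; omega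
      -- injectivity of φ on the two outer ranges
      have hφinj2 : ∀ a b : ℕ, (a ≤ u ∨ v ≤ a) → (b ≤ u ∨ v ≤ b) → φ a = φ b → a = b := by
        have hval : ∀ a : ℕ, (a ≤ u ∨ v ≤ a) →
            (φ a = a ∧ a ≤ u) ∨ (φ a = u + 1 ∧ a = v) ∨ (φ a = a - d ∧ v < a) := by
          intro a ha
          rcases ha with ha|ha
          · exact Or.inl ⟨hφlow a ha, ha⟩
          · rcases ha.lt_or_eq with h|h
            · exact Or.inr (Or.inr ⟨hφhigh a h, h⟩)
            · exact Or.inr (Or.inl ⟨h ▸ hφmid v (by omega) le_rfl, h.symm⟩)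
        intro a b ha hb hab
        rcases hval a ha with ⟨h1,h2⟩|⟨h1,h2⟩|⟨h1,h2⟩ <;>
          rcases hval b hb with ⟨g1,g2⟩|⟨g1,g2⟩|⟨g1,g2⟩ <;> omega
      -- the injection from NS ∪ (Src \ NonMin) into R'
      have hKmem : ∀ e ∈ NS ∪ (Src \ NonMin), Φ e ∈ R' := by
        intro e he'
        have heR : e ∈ R := by
          rcases Finset.mem_union.1 he' with h|h
          · exact (hNSmem e h).1
          · exact (hSrcmem e (Finset.mem_sdiff.1 h).1).1
        have hnes : e ≠ (u,v) := by
          rcases Finset.mem_union.1 he' with h|h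
          · intro hc
            have h9 := (Finset.mem_filter.1 h).2
            rw [hc] at h9
            exact h9 ⟨by omega, le_rfl⟩
          · exact (hSrcmem e (Finset.mem_sdiff.1 h).1).2.2.2.1
        rw [hR'def]
        exact Finset.mem_erase.2 ⟨fun hc => hnes (honly e heR hc), Finset.mem_image_of_mem _ heR⟩
      have hKinj : ∀ e₁ ∈ NS ∪ (Src \ NonMin), ∀ e₂ ∈ NS ∪ (Src \ NonMin),
          Φ e₁ = Φ e₂ → e₁ = e₂ := by
        intro e₁ h₁ e₂ h₂ heq
        have c₁ : φ e₁.1 = φ e₂.1 := by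
          have := congrArg Prod.fst heq; simpa [hΦdef] using this
        have c₂ : φ e₁.2 = φ e₂.2 := by
          have := congrArg Prod.snd heq; simpa [hΦdef] using this
        rcases Finset.mem_union.1 h₁ with hA₁|hB₁ <;> rcases Finset.mem_union.1 h₂ with hA₂|hB₂
        · obtain ⟨hR₁, hr₁⟩ := hNSmem _ hA₁
          obtain ⟨hR₂, hr₂⟩ := hNSmem _ hA₂
          have k₁ := L1 _ hR₁; have k₂ := L1 _ hR₂
          have n₁ := hnu _ hR₁; have n₂ := hnu _ hR₂
          have e11 : e₁.1 = e₂.1 := hφinj2 _ _ k₁ k₂ c₁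
          have e22 : e₁.2 = e₂.2 := hφinj2 _ _ (by omega) (by omega) c₂
          exact Prod.ext e11 e22
        · exfalso
          obtain ⟨hR₁, hr₁⟩ := hNSmem _ hA₁
          obtain ⟨hR₂, k1, k2, k3, k4⟩ := hSrcmem _ (Finset.mem_sdiff.1 hB₂).1
          have h5 : φ e₂.2 = u + 1 := hφmid _ k1 k2
          rcases hr₁ with h|h
          · rw [hφlow e₁.2 h] at c₂; omega
          · rw [hφhigh e₁.2 h] at c₂; omega
        · exfalso
          obtain ⟨hR₂, hr₂⟩ := hNSmem _ hA₂
          obtain ⟨hR₁, k1, k2, k3, k4⟩ := hSrcmem _ (Finset.mem_sdiff.1 hB₁).1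
          have h5 : φ e₁.2 = u + 1 := hφmid _ k1 k2
          rcases hr₂ with h|h
          · rw [hφlow e₂.2 h] at c₂; omega
          · rw [hφhigh e₂.2 h] at c₂; omega
        · obtain ⟨hS₁, hN₁⟩ := Finset.mem_sdiff.1 hB₁
          obtain ⟨hS₂, hN₂⟩ := Finset.mem_sdiff.1 hB₂
          obtain ⟨hR₁, k1, k2, _, k4⟩ := hSrcmem _ hS₁
          obtain ⟨hR₂, l1, l2, _, l4⟩ := hSrcmem _ hS₂
          have e11 : e₁.1 = e₂.1 := by
            rw [hφlow e₁.1 (by omega), hφlow e₂.1 (by omega)] at c₁; exact c₁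
          by_contra hne2
          have h22 : e₁.2 ≠ e₂.2 := fun h => hne2 (Prod.ext e11 h)
          rcases h22.lt_or_gt with h|h
          · exact hN₂ (Finset.mem_filter.2 ⟨hS₂, ⟨e₁, hS₁, e11, h⟩⟩)
          · exact hN₁ (Finset.mem_filter.2 ⟨hS₁, ⟨e₂, hS₂, e11.symm, h⟩⟩)
      have hKcard : NS.card + (Src \ NonMin).card ≤ R'.card := by
        have hdisj : Disjoint NS (Src \ NonMin) := by
          rw [Finset.disjoint_left]
          intro e h1 h2
          have h3 := (Finset.mem_filter.1 h1).2
          have h4 := (hSrcmem e (Finset.mem_sdiff.1 h2).1).2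
          exact h3 ⟨h4.1, h4.2.1⟩
        rw [← Finset.card_union_of_disjoint hdisj]
        exact Finset.card_le_card_of_injOn Φ hKmem
          (fun a ha b hb => hKinj a (Finset.mem_coe.1 ha) b (Finset.mem_coe.1 hb))
      have hSrcNM : (Src \ NonMin).card + NonMin.card = Src.card :=
        Finset.card_sdiff_add_card_eq_card hNMsub
      -- finish by cases
      by_cases hcase : ∃ ee ∈ Src, ee.2 = u + 1
      · -- case B
        have hNM : NonMin.card ≤ v + 1 - (u + 2) := hNMcard (u+2) hNMright
        by_cases hR'ne : R'.Nonempty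
        · have hIH := ih R' (B - d) (τ - (d - 1)) (by omega) hR'rique
            (fun p hp => by
              obtain ⟨e, heR, hΦe, hne'⟩ := hpre p hp
              rw [← hΦe]; exact (hprops e heR hne').1)
            (fun p hp => by
              obtain ⟨e, heR, hΦe, hne'⟩ := hpre p hp
              rw [← hΦe]; exact (hprops e heR hne').2.1)
            (fun p hp => by
              obtain ⟨e, heR, hΦe, hne'⟩ := hpre p hp
              rw [← hΦe]; exact hsumB hcase e heR hne')
            hR'ne
          omega
        · have h0 : R'.card = 0 := by
            rw [Finset.not_nonempty_iff_eq_empty.1 hR'ne]; rfl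
          omega
      · -- case A
        push_neg at hcase
        have hNMright' : ∀ e ∈ NonMin, u + 3 ≤ e.2 := by
          intro e he
          obtain ⟨hpS, wp, hwp, hwp1, hwp2⟩ := Finset.mem_filter.1 he
          have h1 := (hSrcmem wp hwp).2.1
          have h2 := hcase wp hwp
          omega
        have hNM : NonMin.card ≤ v + 1 - (u + 3) := hNMcard (u+3) hNMright'
        by_cases hR'ne : R'.Nonempty
        · have hIH := ih R' (B - d) (τ - d) (by omega) hR'rique
            (fun p hp => by
              obtain ⟨e, heR, hΦe, hne'⟩ := hpre p hp
              rw [← hΦe]; exact (hprops e heR hne').1)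
            (fun p hp => by
              obtain ⟨e, heR, hΦe, hne'⟩ := hpre p hp
              rw [← hΦe]; exact (hprops e heR hne').2.1)
            (fun p hp => by
              obtain ⟨e, heR, hΦe, hne'⟩ := hpre p hp
              rw [← hΦe]; exact (hprops e heR hne').2.2)
            hR'ne
          omega
        · have h0 : R'.card = 0 := by
            rw [Finset.not_nonempty_iff_eq_empty.1 hR'ne]; rfl
          omega
    · -- queue case
      have hSempty : S = ∅ := Finset.not_nonempty_iff_eq_empty.1 hSne
      have hcard2 : R.card ≤ (Finset.Icc τ (2*B-2)).card := by
        apply Finset.card_le_card_of_injOn (fun p => p.1 + p.2)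
        · intro p hp
          have h1 := hnu _ hp
          have h2 := hB _ hp
          have h3 := hτ _ hp
          simp only [Finset.mem_coe, Finset.mem_Icc]
          omega
        · intro p hp q hq hpq
          simp only at hpq
          by_contra hne'
          rcases lt_trichotomy p.1 q.1 with h|h|h
          · have hq2 : q.2 < p.2 := by omega
            have : q ∈ S := Finset.mem_filter.2 ⟨hq, ⟨p, hp, h, hq2⟩⟩
            rw [hSempty] at this; exact absurd this (Finset.notMem_empty q)
          · apply hne'
            have : p.2 = q.2 := by omega
            exact Prod.ext h this
          · have hp2 : p.2 < q.2 := by omega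
            have : p ∈ S := Finset.mem_filter.2 ⟨hp, ⟨q, hq, h, hp2⟩⟩
            rw [hSempty] at this; exact absurd this (Finset.notMem_empty p)
      rw [Nat.card_Icc] at hcard2
      omega

lemma isRique_subset' {E F : Set (ℕ × ℕ)} (h : IsRique E) (hFE : F ⊆ E) : IsRique F := by
  rintro ⟨a,a',b,b',c,c',h1,h2,h3,hrest⟩
  exact h ⟨a,a',b,b',c,c', hFE h1, hFE h2, hFE h3, hrest⟩

lemma sum_odds (k : ℕ) : ∑ j ∈ Finset.range k, (2*j+1) = k^2 := by
  induction k with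
  | zero => simp
  | succ k ih => rw [Finset.sum_range_succ, ih]; ring


theorem combo (n k : ℕ) (hn : 3 ≤ n) (hk1 : 1 ≤ k) (hkn : k ≤ n)
    (E : Finset (ℕ × ℕ)) (col : ℕ × ℕ → Fin k)
    (h1 : ∀ p ∈ E, p.1 < p.2) (h2 : ∀ p ∈ E, p.2 + 1 ≤ n)
    (h3 : ∀ i : Fin k, IsRique {p : ℕ × ℕ | p ∈ E ∧ col p = i}) :
    (E.card : ℤ) ≤ (2 * n + 2) * k - k ^ 2 + (n - 3) := by
  classical
  set U := E.filter (fun p => p.2 = p.1 + 1) with hUdef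
  set W := E.filter (fun p => ¬ p.2 = p.1 + 1) with hWdef
  set Sm := W.filter (fun p => p.1 + p.2 ≤ 2*k) with hSmdef
  set Bg := W.filter (fun p => ¬ p.1 + p.2 ≤ 2*k) with hBgdef
  have hsplit : E.card = U.card + Sm.card + Bg.card := by
    have e1 := Finset.card_filter_add_card_filter_not
      (s := E) (p := fun p : ℕ × ℕ => p.2 = p.1 + 1)
    have e2 := Finset.card_filter_add_card_filter_not
      (s := W) (p := fun p : ℕ × ℕ => p.1 + p.2 ≤ 2*k)
    rw [hUdef, hSmdef, hBgdef, hWdef]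
    rw [hWdef] at e2
    omega
  -- units
  have hU : U.card ≤ n - 1 := by
    have : U.card ≤ (Finset.range (n-1)).card := by
      apply Finset.card_le_card_of_injOn Prod.fst
      · intro p hp
        have hp1 := Finset.mem_filter.1 hp
        have := h1 p hp1.1
        have := h2 p hp1.1
        simp only [Finset.mem_coe, Finset.mem_range]
        omega
      · intro p hp q hq hpq
        have hp1 := (Finset.mem_filter.1 (Finset.mem_coe.1 hp)).2
        have hq1 := (Finset.mem_filter.1 (Finset.mem_coe.1 hq)).2
        exact Prod.ext hpq (by omega)
    simpa using this
  -- small-sum edges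
  have hSm : Sm.card ≤ k^2 := by
    have hsub : Sm ⊆ (Finset.range k).biUnion
        (fun a => {a} ×ˢ Finset.Icc (a+2) (2*k - a)) := by
      intro p hp
      have hp1 := Finset.mem_filter.1 hp
      have hp2 := Finset.mem_filter.1 hp1.1
      have hlt := h1 p hp2.1
      have hnu : p.1 + 2 ≤ p.2 := by
        have := hp2.2; omega
      have hsum := hp1.2
      refine Finset.mem_biUnion.2 ⟨p.1, Finset.mem_range.2 (by omega), ?_⟩
      refine Finset.mem_product.2 ⟨Finset.mem_singleton.2 rfl, Finset.mem_Icc.2 ⟨hnu, by omega⟩⟩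
    calc Sm.card ≤ _ := Finset.card_le_card hsub
    _ ≤ ∑ a ∈ Finset.range k, ({a} ×ˢ Finset.Icc (a+2) (2*k - a)).card :=
        Finset.card_biUnion_le
    _ ≤ ∑ a ∈ Finset.range k, (2*(k - a) - 1) := by
        apply Finset.sum_le_sum
        intro a ha
        rw [Finset.card_product, Finset.card_singleton, one_mul, Nat.card_Icc]
        have := Finset.mem_range.1 ha
        omega
    _ = ∑ a ∈ Finset.range k, (2*(k - 1 - a) + 1) := by
        apply Finset.sum_congr rfl
        intro a ha
        have := Finset.mem_range.1 ha
        omega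
    _ = ∑ j ∈ Finset.range k, (2*j+1) := Finset.sum_range_reflect (fun j => 2*j+1) k
    _ = k^2 := sum_odds k
  -- big edges, per rique
  have hBgi : ∀ i : Fin k, (Bg.filter (fun p => col p = i)).card ≤ 2*(n-1) - (2*k+1) := by
    intro i
    set Bgi := Bg.filter (fun p => col p = i) with hBgidef
    have hBgisub : ∀ p ∈ Bgi, p ∈ E ∧ p.1 + 2 ≤ p.2 ∧ 2*k+1 ≤ p.1 + p.2 ∧ col p = i := by
      intro p hp
      have hp1 := Finset.mem_filter.1 hp
      have hp2 := Finset.mem_filter.1 hp1.1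
      have hp3 := Finset.mem_filter.1 hp2.1
      have := h1 p hp3.1
      refine ⟨hp3.1, by omega, by omega, hp1.2⟩
    by_cases hne : Bgi.Nonempty
    · have hw := wstar Bgi.card Bgi (n-1) (2*k+1) le_rfl
        (isRique_subset' (h3 i) (by
          intro p hp
          have := hBgisub p (Finset.mem_coe.1 hp)
          exact ⟨this.1, this.2.2.2⟩))
        (fun p hp => (hBgisub p hp).2.1)
        (fun p hp => by have h5 := h2 p (hBgisub p hp).1; omega)
        (fun p hp => (hBgisub p hp).2.2.1)
        hne
      omega
    · rw [Finset.not_nonempty_iff_eq_empty.1 hne]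
      simp
  have hBg : Bg.card ≤ k * (2*(n-1) - (2*k+1)) := by
    have hfib : Bg.card = ∑ i : Fin k, (Bg.filter (fun p => col p = i)).card :=
      Finset.card_eq_sum_card_fiberwise (fun p _ => Finset.mem_univ (col p))
    rw [hfib]
    calc ∑ i : Fin k, (Bg.filter (fun p => col p = i)).card
        ≤ ∑ _i : Fin k, (2*(n-1) - (2*k+1)) := Finset.sum_le_sum (fun i _ => hBgi i)
    _ = k * (2*(n-1) - (2*k+1)) := by
        rw [Finset.sum_const, Finset.card_univ, Fintype.card_fin, smul_eq_mul]
  -- final arithmetic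
  have hcard : E.card ≤ (n-1) + k^2 + k * (2*(n-1) - (2*k+1)) := by omega
  have hn' : (1:ℤ) ≤ n := by exact_mod_cast le_trans (by norm_num) hn
  have hle : (E.card : ℤ) ≤ (((n-1) + k^2 + k * (2*(n-1) - (2*k+1)) : ℕ) : ℤ) := by
    exact_mod_cast hcard
  rcases le_or_gt (2*k+1) (2*(n-1)) with hc|hc
  · have h1n : 1 ≤ n := by omega
    have hcast : (((n-1) + k^2 + k * (2*(n-1) - (2*k+1)) : ℕ) : ℤ) =
        (((n:ℤ)-1) + (k:ℤ)^2 + (k:ℤ) * (2*((n:ℤ)-1) - (2*(k:ℤ)+1))) := by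
      push_cast [Nat.cast_sub hc, Nat.cast_sub h1n]
      ring
    rw [hcast] at hle
    have hk' : (1:ℤ) ≤ (k:ℤ) := by exact_mod_cast hk1
    nlinarith [hle, hk']
  · have h0 : 2*(n-1) - (2*k+1) = 0 := by omega
    rw [h0, Nat.mul_zero] at hle
    have h1n : 1 ≤ n := by omega
    have hcast : (((n-1) + k^2 + 0 : ℕ) : ℤ) = ((n:ℤ)-1) + (k:ℤ)^2 := by
      push_cast [Nat.cast_sub h1n]
      ring
    rw [hcast] at hle
    have hk' : (1:ℤ) ≤ (k:ℤ) := by exact_mod_cast hk1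
    have hkn' : (k:ℤ) ≤ (n:ℤ) := by exact_mod_cast hkn
    nlinarith [hle, hk', hkn', mul_nonneg (by linarith : (0:ℤ) ≤ (k:ℤ)) (by linarith : (0:ℤ) ≤ (n:ℤ)-(k:ℤ))]


set_option maxHeartbeats 1000000 in
/-- Let `n ≥ 3` and `1 ≤ k ≤ n`. A finite simple graph with `n` vertices
admitting a rique layout with `k` riques has at most `(2n+2)k - k² + (n-3)`
edges. -/
theorem rique_layout_density (n k : ℕ) (hn : 3 ≤ n) (hk1 : 1 ≤ k)
    (hkn : k ≤ n) (V : Type) [Fintype V] [DecidableEq V] (G : SimpleGraph V)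
    [DecidableRel G.Adj] (hV : Fintype.card V = n)
    (h : HasRiqueLayout G k) :
    (G.edgeFinset.card : ℤ) ≤ (2 * n + 2) * k - k ^ 2 + (n - 3) := by
  classical
  obtain ⟨f, c, hc⟩ := h
  -- the rank of a vertex in the order given by `f`
  set r : V → ℕ := fun v => (Finset.univ.filter (fun w => f w < f v)).card with hrdef
  have hrmono : ∀ a b : V, f a < f b → r a < r b := by
    intro a b hab
    apply Finset.card_lt_card
    rw [Finset.ssubset_iff_of_subset]
    · exact ⟨a, Finset.mem_filter.2 ⟨Finset.mem_univ _, hab⟩,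
        fun hmem => absurd (Finset.mem_filter.1 hmem).2 (lt_irrefl _)⟩
    · intro w hw
      exact Finset.mem_filter.2 ⟨Finset.mem_univ _, lt_trans (Finset.mem_filter.1 hw).2 hab⟩
  have hrinj : Function.Injective r := by
    intro a b hab
    by_contra hcon
    have hfab : f a ≠ f b := fun h' => hcon (f.injective h')
    rcases hfab.lt_or_gt with h'|h'
    · exact absurd hab (Nat.ne_of_lt (hrmono _ _ h'))
    · exact absurd hab.symm (Nat.ne_of_lt (hrmono _ _ h'))
  have hrrev : ∀ a b : V, r a < r b → f a < f b := by
    intro a b hab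
    by_contra hcon
    push_neg at hcon
    rcases hcon.lt_or_eq with h'|h'
    · exact absurd hab (by have := hrmono _ _ h'; omega)
    · have : b = a := f.injective h'
      subst this
      exact absurd hab (lt_irrefl _)
  have hrbound : ∀ v : V, r v + 1 ≤ n := by
    intro v
    have hsub : Finset.univ.filter (fun w => f w < f v) ⊆ Finset.univ.erase v := by
      intro w hw
      refine Finset.mem_erase.2 ⟨?_, Finset.mem_univ _⟩
      intro hC
      rw [hC] at hw
      exact absurd (Finset.mem_filter.1 hw).2 (lt_irrefl _)
    have h1 := Finset.card_le_card hsub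
    rw [Finset.card_erase_of_mem (Finset.mem_univ v), Finset.card_univ, hV] at h1
    have : r v = (Finset.univ.filter (fun w => f w < f v)).card := rfl
    omega
  -- the set of edges as ordered pairs of vertices
  set D : Finset (V × V) := Finset.univ.filter (fun q => G.Adj q.1 q.2 ∧ f q.1 < f q.2)
    with hDdef
  have hDmem : ∀ q ∈ D, G.Adj q.1 q.2 ∧ f q.1 < f q.2 := by
    intro q hq; exact (Finset.mem_filter.1 hq).2
  have hDcard : D.card = G.edgeFinset.card := by
    apply Finset.card_bij (fun q _ => s(q.1, q.2))
    · intro q hq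
      exact SimpleGraph.mem_edgeFinset.2 ((hDmem q hq).1)
    · intro q1 h1 q2 h2 heq
      have a1 := hDmem q1 h1
      have a2 := hDmem q2 h2
      rcases Sym2.eq_iff.1 heq with ⟨e1,e2⟩|⟨e1,e2⟩
      · exact Prod.ext e1 e2
      · exfalso
        rw [e1, e2] at a1
        exact absurd (lt_trans a1.2 a2.2) (lt_irrefl _)
    · intro e he
      induction e with
      | _ x y =>
        have hadj : G.Adj x y := SimpleGraph.mem_edgeFinset.1 he
        have hne : f x ≠ f y := fun h' => G.ne_of_adj hadj (f.injective h')
        rcases hne.lt_or_gt with h'|h'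
        · exact ⟨(x, y), Finset.mem_filter.2 ⟨Finset.mem_univ _, hadj, h'⟩, rfl⟩
        · exact ⟨(y, x), Finset.mem_filter.2 ⟨Finset.mem_univ _, hadj.symm, h'⟩, Sym2.eq_swap⟩
  set EE : Finset (ℕ × ℕ) := D.image (fun q => (r q.1, r q.2)) with hEdef
  have hEcard : EE.card = D.card := by
    apply Finset.card_image_of_injOn
    intro q1 h1 q2 h2 heq
    have e1 : r q1.1 = r q2.1 := congrArg Prod.fst heq
    have e2 : r q1.2 = r q2.2 := congrArg Prod.snd heq
    exact Prod.ext (hrinj e1) (hrinj e2)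
  -- the colouring transported to rank pairs
  set col : ℕ × ℕ → Fin k := fun p =>
    if hq : ∃ q : V × V, q ∈ D ∧ (r q.1, r q.2) = p then
      c (f hq.choose.1, f hq.choose.2) else ⟨0, hk1⟩ with hcoldef
  have hcol : ∀ q ∈ D, col (r q.1, r q.2) = c (f q.1, f q.2) := by
    intro q hq
    have hex : ∃ q' : V × V, q' ∈ D ∧ (r q'.1, r q'.2) = (r q.1, r q.2) := ⟨q, hq, rfl⟩
    rw [hcoldef]
    simp only [dif_pos hex]
    obtain ⟨hD', heq⟩ := hex.choose_spec
    have h1 : hex.choose.1 = q.1 := hrinj (congrArg Prod.fst heq)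
    have h2 : hex.choose.2 = q.2 := hrinj (congrArg Prod.snd heq)
    rw [h1, h2]
  have hmain := combo n k hn hk1 hkn EE col
    (by
      intro p hp
      obtain ⟨q, hq, hqe⟩ := Finset.mem_image.1 hp
      rw [← hqe]
      exact hrmono _ _ (hDmem q hq).2)
    (by
      intro p hp
      obtain ⟨q, hq, hqe⟩ := Finset.mem_image.1 hp
      rw [← hqe]
      exact hrbound q.2)
    (by
      intro i
      rintro ⟨a, a', b, b', c₃, c₃', ⟨m1, c1⟩, ⟨m2, c2⟩, ⟨m3, c3⟩, i1, i2, i3, i4, i5⟩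
      obtain ⟨q₁, hq₁D, hq₁⟩ := Finset.mem_image.1 m1
      obtain ⟨q₂, hq₂D, hq₂⟩ := Finset.mem_image.1 m2
      obtain ⟨q₃, hq₃D, hq₃⟩ := Finset.mem_image.1 m3
      have d₁ := hDmem q₁ hq₁D
      have d₂ := hDmem q₂ hq₂D
      have d₃ := hDmem q₃ hq₃D
      have cc1 : c (f q₁.1, f q₁.2) = i := by rw [← hcol q₁ hq₁D, hq₁]; exact c1
      have cc2 : c (f q₂.1, f q₂.2) = i := by rw [← hcol q₂ hq₂D, hq₂]; exact c2
      have cc3 : c (f q₃.1, f q₃.2) = i := by rw [← hcol q₃ hq₃D, hq₃]; exact c3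
      have ra₁ : r q₁.1 = a := congrArg Prod.fst hq₁
      have ra₁' : r q₁.2 = a' := congrArg Prod.snd hq₁
      have ra₂ : r q₂.1 = b := congrArg Prod.fst hq₂
      have ra₂' : r q₂.2 = b' := congrArg Prod.snd hq₂
      have ra₃ : r q₃.1 = c₃ := congrArg Prod.fst hq₃
      have ra₃' : r q₃.2 = c₃' := congrArg Prod.snd hq₃
      exact hc i ⟨f q₁.1, f q₁.2, f q₂.1, f q₂.2, f q₃.1, f q₃.2,
        ⟨⟨q₁.1, q₁.2, d₁.1, rfl, rfl, d₁.2⟩, cc1⟩,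
        ⟨⟨q₂.1, q₂.2, d₂.1, rfl, rfl, d₂.2⟩, cc2⟩,
        ⟨⟨q₃.1, q₃.2, d₃.1, rfl, rfl, d₃.2⟩, cc3⟩,
        hrrev _ _ (by rw [ra₁, ra₂]; exact i1),
        hrrev _ _ (by rw [ra₂, ra₃]; exact i2),
        hrrev _ _ (by rw [ra₃, ra₂']; exact i3),
        hrrev _ _ (by rw [ra₂', ra₁']; exact i4),
        hrrev _ _ (by rw [ra₂', ra₃']; exact i5)⟩)
  rw [hEcard, hDcard] at hmain
  exact hmain

end DequePaper
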